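/- Let A, B ∈ SL₃(ℂ) be matrices with tr(ABA⁻¹B⁻¹) ≠ tr(BAB⁻¹A⁻¹). Then both A and B are regular, i.e., for every λ ∈ ℂ the eigenspace ker(A − λ·Id) has dimension at most 1, and likewise every eigenspace ker(B − λ·Id) has dimension at most 1. -/

import Mathlib

open Matrix

private lemma rank_one_sq (M : Matrix (Fin 3) (Fin 3) ℂ)
    (hk : 2 ≤ Module.finrank ℂ (LinearMap.ker (Matrix.toLin' M))) :
    M * M = M.trace • M := by
  have hrn := LinearMap.finrank_range_add_finrank_ker (Matrix.toLin' M : (Fin 3 → ℂ) →ₗ[ℂ] (Fin 3 → ℂ))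
  have hdim : Module.finrank ℂ (Fin 3 → ℂ) = 3 := by simp
  have hr : Module.finrank ℂ (LinearMap.range (Matrix.toLin' M)) ≤ 1 := by omega
  obtain ⟨v, hv⟩ := finrank_le_one_iff.mp hr
  -- each column of M is a multiple of v
  have hcol : ∀ j : Fin 3, ∃ c : ℂ, ∀ i, M i j = c * (v : Fin 3 → ℂ) i := by
    intro j
    have hmem : (fun i => M i j) ∈ LinearMap.range (Matrix.toLin' M) := by
      refine ⟨Pi.single j 1, ?_⟩
      rw [Matrix.toLin'_apply]
      simp
      rfl
    obtain ⟨c, hc⟩ := hv ⟨_, hmem⟩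
    refine ⟨c, fun i => ?_⟩
    have hc' : c • (v : Fin 3 → ℂ) = fun i => M i j := by
      have := congrArg Subtype.val hc
      simpa using this
    have := congrFun hc' i
    simpa using this.symm
  choose c hc using hcol
  have hM : ∀ i j, M i j = (v : Fin 3 → ℂ) i * c j := by
    intro i j; rw [hc j i]; ring
  ext i j
  simp only [Matrix.mul_apply, Matrix.smul_apply, Matrix.trace, Matrix.diag, smul_eq_mul]
  calc ∑ k, M i k * M k j = ∑ k, ((v : Fin 3 → ℂ) k * c k) * ((v : Fin 3 → ℂ) i * c j) := by
        refine Finset.sum_congr rfl fun k _ => ?_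
        rw [hM i k, hM k j]; ring
    _ = (∑ k, M k k) * M i j := by
        rw [← Finset.sum_mul, hM i j, Finset.sum_congr rfl fun k _ => (hM k k)]

private lemma affine_inv (A : Matrix.SpecialLinearGroup (Fin 3) ℂ) (lam : ℂ)
    (hk : 2 ≤ Module.finrank ℂ
      (LinearMap.ker (Matrix.toLin' ((↑A : Matrix (Fin 3) (Fin 3) ℂ) - lam • 1)))) :
    ∃ p q : ℂ, (↑(A⁻¹) : Matrix (Fin 3) (Fin 3) ℂ) = p • 1 + q • (↑A : Matrix (Fin 3) (Fin 3) ℂ) := by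
  set a : Matrix (Fin 3) (Fin 3) ℂ := ↑A with ha
  set C : Matrix (Fin 3) (Fin 3) ℂ := ↑(A⁻¹) with hC
  have hCa : C * a = 1 := by
    rw [ha, hC, ← Matrix.SpecialLinearGroup.coe_mul, inv_mul_cancel]
    rfl
  have haC : a * C = 1 := by
    rw [ha, hC, ← Matrix.SpecialLinearGroup.coe_mul, mul_inv_cancel]
    rfl
  have hlam : lam ≠ 0 := by
    rintro rfl
    have hker : LinearMap.ker (Matrix.toLin' (a - (0:ℂ) • 1)) = ⊥ := by
      rw [LinearMap.ker_eq_bot']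
      intro x hx
      rw [Matrix.toLin'_apply] at hx
      simp only [zero_smul, sub_zero] at hx
      have : (C * a) *ᵥ x = 0 := by rw [← Matrix.mulVec_mulVec, hx, Matrix.mulVec_zero]
      rwa [hCa, Matrix.one_mulVec] at this
    rw [hker] at hk
    simp at hk
  set M : Matrix (Fin 3) (Fin 3) ℂ := a - lam • 1 with hMdef
  have hMM : M * M = M.trace • M := rank_one_sq M hk
  have haM : a = lam • 1 + M := by rw [hMdef]; module
  by_cases ht : lam + M.trace = 0
  · -- a * M = 0, so M = 0, a = lam • 1
    have haM0 : a * M = 0 := by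
      rw [haM, add_mul, hMM, smul_mul_assoc, one_mul, ← add_smul, add_comm lam M.trace,
        add_comm M.trace lam, ht, zero_smul]
    have hM0 : M = 0 := by
      have : (C * a) * M = 0 := by rw [mul_assoc, haM0, mul_zero]
      rwa [hCa, one_mul] at this
    have haeq : a = lam • 1 := by rw [haM, hM0, add_zero]
    refine ⟨lam⁻¹, 0, ?_⟩
    have : C * a = 1 := hCa
    rw [haeq] at this
    have hCval : C = lam⁻¹ • 1 := by
      have h2 : lam • C = 1 := by
        rw [← this]; rw [Matrix.mul_smul, mul_one]
      calc C = lam⁻¹ • (lam • C) := by rw [smul_smul, inv_mul_cancel₀ hlam, one_smul]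
        _ = lam⁻¹ • 1 := by rw [h2]
    rw [hCval, zero_smul, add_zero]
  · set q : ℂ := -(1 / (lam * (lam + M.trace))) with hq
    refine ⟨lam⁻¹ - q * lam, q, ?_⟩
    have hkey : a * ((lam⁻¹ - q * lam) • 1 + q • a) = 1 := by
      rw [haM]
      have hexp : (lam • 1 + M) * ((lam⁻¹ - q * lam) • 1 + q • (lam • 1 + M))
          = (lam * lam⁻¹) • 1 + (lam * q + lam⁻¹ + q * M.trace) • M := by
        simp only [mul_add, add_mul, smul_mul_assoc, Matrix.mul_smul, mul_one, one_mul,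
          smul_smul, hMM]
        match_scalars <;> ring
      rw [hexp, mul_inv_cancel₀ hlam, one_smul]
      have hcoef : lam * q + lam⁻¹ + q * M.trace = 0 := by
        rw [hq]
        field_simp
        ring
      rw [hcoef, zero_smul, add_zero]
    calc C = C * (a * ((lam⁻¹ - q * lam) • 1 + q • a)) := by rw [hkey, mul_one]
      _ = (C * a) * ((lam⁻¹ - q * lam) • 1 + q • a) := by rw [mul_assoc]
      _ = (lam⁻¹ - q * lam) • 1 + q • a := by rw [hCa, one_mul]

private lemma trace_comm_eq (A B : Matrix.SpecialLinearGroup (Fin 3) ℂ)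
    (p q : ℂ)
    (hA : (↑(A⁻¹) : Matrix (Fin 3) (Fin 3) ℂ) = p • 1 + q • (↑A : Matrix (Fin 3) (Fin 3) ℂ)) :
    Matrix.trace ((↑(A * B * A⁻¹ * B⁻¹) : Matrix (Fin 3) (Fin 3) ℂ)) =
    Matrix.trace ((↑(B * A * B⁻¹ * A⁻¹) : Matrix (Fin 3) (Fin 3) ℂ)) := by
  set a : Matrix (Fin 3) (Fin 3) ℂ := ↑A
  set b : Matrix (Fin 3) (Fin 3) ℂ := ↑B
  set b' : Matrix (Fin 3) (Fin 3) ℂ := ↑(B⁻¹)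
  have hbb' : b * b' = 1 := by
    rw [← Matrix.SpecialLinearGroup.coe_mul, mul_inv_cancel]; rfl
  have hb'b : b' * b = 1 := by
    rw [← Matrix.SpecialLinearGroup.coe_mul, inv_mul_cancel]; rfl
  have hL : (↑(A * B * A⁻¹ * B⁻¹) : Matrix (Fin 3) (Fin 3) ℂ) = a * b * (p • 1 + q • a) * b' := by
    rw [Matrix.SpecialLinearGroup.coe_mul, Matrix.SpecialLinearGroup.coe_mul,
      Matrix.SpecialLinearGroup.coe_mul, hA]
  have hR : (↑(B * A * B⁻¹ * A⁻¹) : Matrix (Fin 3) (Fin 3) ℂ) = b * a * b' * (p • 1 + q • a) := by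
    rw [Matrix.SpecialLinearGroup.coe_mul, Matrix.SpecialLinearGroup.coe_mul,
      Matrix.SpecialLinearGroup.coe_mul, hA]
  rw [hL, hR]
  have e1 : a * b * (p • 1 + q • a) * b' = p • (a * (b * b')) + q • (a * b * a * b') := by
    rw [mul_add, add_mul, Matrix.mul_smul, Matrix.mul_smul, smul_mul_assoc, smul_mul_assoc,
      mul_one, mul_assoc a b b']
  have e2 : b * a * b' * (p • 1 + q • a) = p • (b * a * b') + q • (b * a * b' * a) := by
    rw [mul_add, Matrix.mul_smul, Matrix.mul_smul, mul_one]
  rw [e1, e2, Matrix.trace_add, Matrix.trace_add, Matrix.trace_smul, Matrix.trace_smul,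
    Matrix.trace_smul, Matrix.trace_smul]
  congr 1
  · rw [hbb', mul_one]
    congr 1
    calc Matrix.trace a = Matrix.trace (b' * (b * a)) := by
          rw [← mul_assoc, hb'b, one_mul]
      _ = Matrix.trace (b * a * b') := Matrix.trace_mul_comm _ _
  · congr 1
    have h1 : Matrix.trace (b * a * b' * a) = Matrix.trace (a * (b * a * b')) :=
      Matrix.trace_mul_comm _ _
    rw [h1]
    congr 1
    simp only [mul_assoc]

theorem stmt_0 (A B : Matrix.SpecialLinearGroup (Fin 3) ℂ)
    (h : Matrix.trace ((↑(A * B * A⁻¹ * B⁻¹) : Matrix (Fin 3) (Fin 3) ℂ)) ≠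
         Matrix.trace ((↑(B * A * B⁻¹ * A⁻¹) : Matrix (Fin 3) (Fin 3) ℂ))) :
    (∀ lam : ℂ, Module.finrank ℂ
        (LinearMap.ker (Matrix.toLin' ((↑A : Matrix (Fin 3) (Fin 3) ℂ) - lam • 1))) ≤ 1) ∧
    (∀ lam : ℂ, Module.finrank ℂ
        (LinearMap.ker (Matrix.toLin' ((↑B : Matrix (Fin 3) (Fin 3) ℂ) - lam • 1))) ≤ 1) := by
  constructor
  · intro lam
    by_contra hge
    push_neg at hge
    obtain ⟨p, q, hpq⟩ := affine_inv A lam hge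
    exact h (trace_comm_eq A B p q hpq)
  · intro lam
    by_contra hge
    push_neg at hge
    obtain ⟨p, q, hpq⟩ := affine_inv B lam hge
    exact h (trace_comm_eq B A p q hpq).symm
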